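/- Let S be a finite set of points in a real normed vector space and let r ≥ 0. For p, q ∈ S, the points p and q lie in the same path component of the union ⋃_{x ∈ S} closedBall(x, r) of closed balls of radius r centered at the points of S if and only if p and q lie in the same connected component of the Vietoris–Rips graph G_{2r}(S), i.e. the simple graph on S joining distinct points at distance at most 2r. -/

import Mathlib

/-- The Vietoris–Rips graph at scale `s` on a finite set `S` of points of a metric
space: distinct points `p, q ∈ S` are adjacent exactly when `dist p q ≤ s`. -/
def ripsGraph {X : Type*} [MetricSpace X] (S : Finset X) (r : ℝ) :
    SimpleGraph {x // x ∈ S} where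
  Adj p q := p ≠ q ∧ dist (p : X) (q : X) ≤ r
  symm := by
    constructor
    intro p q ⟨hpq, hd⟩
    exact ⟨hpq.symm, by rwa [dist_comm]⟩
  loopless := by
    constructor
    intro p ⟨hp, _⟩
    exact hp rfl

/-- A preconnected set contained in a union of two disjoint closed sets and
meeting the first one is contained in the first one. -/
lemma isPreconnected_subset_left_of_closed {X : Type*} [TopologicalSpace X]
    {s u v : Set X} (hs : IsPreconnected s) (hu : IsClosed u) (hv : IsClosed v)
    (huv : Disjoint u v) (hsuv : s ⊆ u ∪ v) (hne : (s ∩ u).Nonempty) : s ⊆ u := by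
  intro x hx
  by_contra hxu
  have hxv : x ∈ v := (hsuv hx).resolve_left hxu
  obtain ⟨y, hy, hyu, hyv⟩ := isPreconnected_closed_iff.1 hs u v hu hv hsuv hne ⟨x, hx, hxv⟩
  exact huv.ne_of_mem hyu hyv rfl

/-- If `dist x y ≤ 2 * r`, the points `x` and `y` are joined in
`closedBall x r ∪ closedBall y r`. -/
lemma joinedIn_union_closedBall {E : Type*} [NormedAddCommGroup E] [NormedSpace ℝ E]
    {x y : E} {r : ℝ} (hr : 0 ≤ r) (h : dist x y ≤ 2 * r) :
    JoinedIn (Metric.closedBall x r ∪ Metric.closedBall y r) x y := by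
  set m := midpoint ℝ x y
  have hmx : m ∈ Metric.closedBall x r := by
    rw [Metric.mem_closedBall, dist_midpoint_left]
    simp only [Real.norm_ofNat]
    linarith
  have hmy : m ∈ Metric.closedBall y r := by
    rw [Metric.mem_closedBall, dist_midpoint_right]
    simp only [Real.norm_ofNat]
    linarith
  have hxx : x ∈ Metric.closedBall x r := Metric.mem_closedBall_self hr
  have hyy : y ∈ Metric.closedBall y r := Metric.mem_closedBall_self hr
  have h1 : JoinedIn (Metric.closedBall x r) x m :=
    ((convex_closedBall x r).isPathConnected ⟨x, hxx⟩).joinedIn x hxx m hmx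
  have h2 : JoinedIn (Metric.closedBall y r) m y :=
    ((convex_closedBall y r).isPathConnected ⟨y, hyy⟩).joinedIn m hmy y hyy
  exact (h1.mono Set.subset_union_left).trans (h2.mono Set.subset_union_right)

/-- For a finite set `S` in a real normed vector space and `r ≥ 0`, two points
`p, q ∈ S` lie in the same path component of the union of the closed balls of
radius `r` centered at the points of `S` if and only if they lie in the same
connected component of the Vietoris–Rips graph at scale `2r`. -/
theorem joinedIn_ball_union_iff_ripsGraph_reachable
    {E : Type*} [NormedAddCommGroup E] [NormedSpace ℝ E]
    (S : Finset E) (r : ℝ) (hr : 0 ≤ r) (p q : {x // x ∈ S}) :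
    JoinedIn (⋃ x ∈ S, Metric.closedBall x r) (p : E) (q : E) ↔
      (ripsGraph S (2 * r)).Reachable p q := by
  set U : Set E := ⋃ x ∈ S, Metric.closedBall x r with hU
  have hball : ∀ z : {x // x ∈ S}, Metric.closedBall (z : E) r ⊆ U := fun z =>
    Set.subset_biUnion_of_mem (u := fun x => Metric.closedBall x r) z.2
  constructor
  · rintro ⟨γ, hγ⟩
    -- V : union of balls with reachable centers, W : the rest
    set T : Set {x // x ∈ S} := {x | (ripsGraph S (2 * r)).Reachable p x} with hT
    set V : Set E := ⋃ x ∈ T, Metric.closedBall (x : E) r with hV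
    set W : Set E := ⋃ x ∈ Tᶜ, Metric.closedBall (x : E) r with hW
    have hVc : IsClosed V := T.toFinite.isClosed_biUnion fun _ _ => Metric.isClosed_closedBall
    have hWc : IsClosed W := Tᶜ.toFinite.isClosed_biUnion fun _ _ => Metric.isClosed_closedBall
    have hdisj : Disjoint V W := by
      rw [Set.disjoint_left]
      rintro z hzV hzW
      simp only [hV, hW, Set.mem_iUnion] at hzV hzW
      obtain ⟨a, haT, hza⟩ := hzV
      obtain ⟨b, hbT, hzb⟩ := hzW
      have hab : dist (a : E) (b : E) ≤ 2 * r := by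
        calc dist (a : E) (b : E) ≤ dist (a : E) z + dist z (b : E) := dist_triangle _ _ _
          _ ≤ r + r := add_le_add (Metric.mem_closedBall'.mp hza) (Metric.mem_closedBall.mp hzb)
          _ = 2 * r := by ring
      rcases eq_or_ne a b with rfl | hne
      · exact hbT haT
      · exact hbT (haT.trans (SimpleGraph.Adj.reachable ⟨hne, hab⟩))
    have hUVW : U ⊆ V ∪ W := by
      intro z hz
      simp only [hU, Set.mem_iUnion] at hz
      obtain ⟨x, hxS, hzx⟩ := hz
      by_cases hx : (⟨x, hxS⟩ : {x // x ∈ S}) ∈ T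
      · exact Or.inl (Set.mem_biUnion hx hzx)
      · exact Or.inr (Set.mem_biUnion hx hzx)
    have hpV : (p : E) ∈ V :=
      Set.mem_biUnion (by exact SimpleGraph.Reachable.refl p) (Metric.mem_closedBall_self hr)
    have hrange : Set.range γ ⊆ V := by
      refine isPreconnected_subset_left_of_closed
        (isPreconnected_range γ.continuous) hVc hWc hdisj ?_ ?_
      · rintro _ ⟨t, rfl⟩; exact hUVW (hγ t)
      · exact ⟨(p : E), ⟨0, γ.source⟩, hpV⟩
    have hqV : (q : E) ∈ V := by
      have := hrange ⟨1, γ.target⟩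
      exact this
    simp only [hV, Set.mem_iUnion] at hqV
    obtain ⟨a, haT, hqa⟩ := hqV
    rcases eq_or_ne a q with rfl | hne
    · exact haT
    · refine haT.trans (SimpleGraph.Adj.reachable ⟨hne, ?_⟩)
      calc dist (a : E) (q : E) ≤ r := Metric.mem_closedBall'.mp hqa
        _ ≤ 2 * r := by linarith
  · intro h
    obtain ⟨w⟩ := h
    induction w with
    | nil => exact JoinedIn.refl (hball _ (Metric.mem_closedBall_self hr))
    | cons hadj _ ih =>
      refine JoinedIn.trans ?_ ih
      obtain ⟨hne, hd⟩ := hadj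
      exact (joinedIn_union_closedBall hr hd).mono
        (Set.union_subset (hball _) (hball _))
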